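/- Let N ≤ H be finite-index normal subgroups of B₃, both contained in PB₃. Then H_ord divides N_ord, N ∩ F₂ ≤ H ∩ F₂, and every pair (m,f) representing a GT-shadow with target N also represents a GT-shadow with target H; hence there is a well-defined reduction map R_{N,H} : GT(N) → GT(H) sending [m,f] to (m + H_ord ℤ, f·(H∩F₂)). -/

import Mathlib

def braidRel : Set (FreeGroup (Fin 2)) :=
  {FreeGroup.of 0 * FreeGroup.of 1 * FreeGroup.of 0 *
    (FreeGroup.of 1 * FreeGroup.of 0 * FreeGroup.of 1)⁻¹}

/-- The Artin braid group on 3 strands. -/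
abbrev B3 := PresentedGroup braidRel

def σ₁ : B3 := PresentedGroup.of 0
def σ₂ : B3 := PresentedGroup.of 1

/-- The standard projection B₃ → S₃. -/
def ρ : B3 →* Equiv.Perm (Fin 3) :=
  PresentedGroup.toGroup (f := ![Equiv.swap 0 1, Equiv.swap 1 2]) (by
    intro r hr
    simp only [braidRel, Set.mem_singleton_iff] at hr
    subst hr
    simp only [map_mul, map_inv, FreeGroup.lift_apply_of]
    decide)

/-- The pure braid group on 3 strands. -/
def PB3 : Subgroup B3 := ρ.ker

def c : B3 := (σ₁ * σ₂ * σ₁) ^ 2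

abbrev F2 := FreeGroup (Fin 2)
def xx : F2 := FreeGroup.of 0
def yy : F2 := FreeGroup.of 1

/-- The identification of F₂ with ⟨σ₁², σ₂²⟩ ≤ PB₃. -/
def ι : F2 →* B3 := FreeGroup.lift ![σ₁ ^ 2, σ₂ ^ 2]

/-- The pair (m, f) satisfies the two hexagon relations modulo N. -/
def Hex (N : Subgroup B3) [N.Normal] (m : ℤ) (f : F2) : Prop :=
  QuotientGroup.mk' N (σ₁ ^ (2 * m + 1) * (ι f)⁻¹ * σ₂ ^ (2 * m + 1) * ι f) =
      QuotientGroup.mk' N ((ι f)⁻¹ * σ₁ * σ₂ * (σ₁ ^ 2) ^ (-m) * c ^ m) ∧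
  QuotientGroup.mk' N ((ι f)⁻¹ * σ₂ ^ (2 * m + 1) * ι f * σ₁ ^ (2 * m + 1)) =
      QuotientGroup.mk' N (σ₂ * σ₁ * (σ₂ ^ 2) ^ (-m) * c ^ m * ι f)

/-- N_ord: the lcm of the orders of x₁₂N, x₂₃N and cN in B₃/N. -/
noncomputable def Nord (N : Subgroup B3) [N.Normal] : ℕ :=
  Nat.lcm
    (Nat.lcm (orderOf (QuotientGroup.mk' N (σ₁ ^ 2)))
      (orderOf (QuotientGroup.mk' N (σ₂ ^ 2))))
    (orderOf (QuotientGroup.mk' N c))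

/-- The endomorphism E_{m,f} of F₂. -/
def Emap (m : ℤ) (f : F2) : F2 →* F2 :=
  FreeGroup.lift ![xx ^ (2 * m + 1), f⁻¹ * yy ^ (2 * m + 1) * f]

/-- [m, f] is a GT-shadow with target N and kernel (source) K. -/
def IsShadow (K N : Subgroup B3) [N.Normal] (m : ℤ) (f : F2) : Prop :=
  Hex N m f ∧
  (∃ g ∈ commutator F2, g⁻¹ * f ∈ N.comap ι) ∧
  IsUnit ((2 * m + 1 : ℤ) : ZMod (Nord N)) ∧
  ∃ T : B3 →* B3 ⧸ N,
    T σ₁ = QuotientGroup.mk' N (σ₁ ^ (2 * m + 1)) ∧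
    T σ₂ = QuotientGroup.mk' N ((ι f)⁻¹ * σ₂ ^ (2 * m + 1) * ι f) ∧
    Function.Surjective T ∧
    T.ker = K

/-- [m, f] is a GT-shadow with target N (with unspecified source). -/
def IsShadowTgt (N : Subgroup B3) [N.Normal] (m : ℤ) (f : F2) : Prop :=
  ∃ K : Subgroup B3, IsShadow K N m f

/-- The reduction map: if N ≤ H then H_ord ∣ N_ord, N ∩ F₂ ≤ H ∩ F₂, and every
pair representing a GT-shadow with target N also represents a GT-shadow with
target H; hence R_{N,H} : GT(N) → GT(H), [m,f] ↦ (m + H_ord ℤ, f(H∩F₂)) is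
well defined. -/
theorem reduction_map (N H : Subgroup B3) [N.Normal] [H.Normal]
    (hNfin : N.FiniteIndex) (hHfin : H.FiniteIndex)
    (hNle : N ≤ PB3) (hHle : H ≤ PB3) (hNH : N ≤ H) :
    Nord H ∣ Nord N ∧
    N.comap ι ≤ H.comap ι ∧
    (∀ (m : ℤ) (f : F2), IsShadowTgt N m f → IsShadowTgt H m f) := by
  
  -- the canonical projection B₃/N → B₃/H
  have hker : ∀ x ∈ N, QuotientGroup.mk' H x = 1 := fun x hx =>
    (QuotientGroup.eq_one_iff _).2 (hNH hx)
  let φ : B3 ⧸ N →* B3 ⧸ H :=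
    QuotientGroup.lift N (QuotientGroup.mk' H) hker
  have hφ : ∀ x : B3, φ (QuotientGroup.mk' N x) = QuotientGroup.mk' H x :=
    fun x => rfl
  have hφsurj : Function.Surjective φ := by
    intro y
    obtain ⟨x, rfl⟩ := QuotientGroup.mk'_surjective H y
    exact ⟨QuotientGroup.mk' N x, rfl⟩
  have hdvd : Nord H ∣ Nord N := by
    have key : ∀ x : B3,
        orderOf (QuotientGroup.mk' H x) ∣ orderOf (QuotientGroup.mk' N x) := by
      intro x
      have := orderOf_map_dvd φ (QuotientGroup.mk' N x)
      rwa [hφ] at this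
    refine Nat.lcm_dvd (Nat.lcm_dvd ?_ ?_) ?_
    · exact dvd_trans (key _) (dvd_trans (Nat.dvd_lcm_left _ _) (Nat.dvd_lcm_left _ _))
    · exact dvd_trans (key _) (dvd_trans (Nat.dvd_lcm_right _ _) (Nat.dvd_lcm_left _ _))
    · exact dvd_trans (key _) (Nat.dvd_lcm_right _ _)
  refine ⟨hdvd, Subgroup.comap_mono hNH, ?_⟩
  rintro m f ⟨K, ⟨hex1, hex2⟩, ⟨g, hg, hgf⟩, hu, T, hT1, hT2, hTsurj, hTker⟩
  refine ⟨(φ.comp T).ker, ⟨?_, ?_⟩, ⟨g, hg, Subgroup.comap_mono hNH hgf⟩, ?_,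
    φ.comp T, ?_, ?_, hφsurj.comp hTsurj, rfl⟩
  · have := congrArg φ hex1
    simpa only [hφ] using this
  · have := congrArg φ hex2
    simpa only [hφ] using this
  · have := hu.map (ZMod.castHom hdvd (ZMod (Nord H)))
    rwa [map_intCast] at this
  · rw [MonoidHom.comp_apply, hT1]; exact hφ _
  · rw [MonoidHom.comp_apply, hT2]; exact hφ _
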